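/- Let A ⊂ ℝ^{d'} be compact with Hausdorff dimension parameter α ∈ (0, d'] and H_α(A) > 0, let w be a bounded lower semicontinuous weight on A×A that is bounded below by η > 0 on some neighborhood of the diagonal, and s > α. Then there is a constant c_s > 0 such that every N-point configuration minimizing the weighted Riesz s-energy E_s^w on A has minimal pairwise distance at least c_s N^{-1/α}. -/

import Mathlib

open Finset MeasureTheory Metric

lemma aux_content {d' : ℕ} (α : ℝ) (hα0 : 0 < α)
    (A : Set (EuclideanSpace ℝ (Fin d'))) (hHα : 0 < μH[α] A) :
    ∃ h : ℝ, 0 < h ∧ ∀ F : Finset (EuclideanSpace ℝ (Fin d') × ℝ),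
      (∀ p ∈ F, 0 ≤ p.2) → A ⊆ ⋃ p ∈ F, closedBall p.1 p.2 →
      h ≤ ∑ p ∈ F, (2 * p.2) ^ α := by
  by_contra hcon
  push_neg at hcon
  choose F hF1 hF2 hF3 using fun n : ℕ => hcon (((n : ℝ) + 1)⁻¹) (by positivity)
  have hzero : μH[α] A = 0 := by
    have key := MeasureTheory.Measure.hausdorffMeasure_le_liminf_sum (X := EuclideanSpace ℝ (Fin d'))
      (ι := fun n : ℕ => {p // p ∈ F n}) α A (l := Filter.atTop)
      (fun n => ENNReal.ofReal ((((n : ℝ) + 1)⁻¹) ^ α⁻¹))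
      (by
        rw [← ENNReal.ofReal_zero]
        apply ENNReal.tendsto_ofReal
        have h1 : Filter.Tendsto (fun n : ℕ => ((n : ℝ) + 1)⁻¹) Filter.atTop (nhds 0) := by
          simpa [one_div] using (tendsto_one_div_add_atTop_nhds_zero_nat : Filter.Tendsto (fun n : ℕ => 1 / ((n : ℝ) + 1)) Filter.atTop (nhds 0))
        have := (Real.continuousAt_rpow_const 0 α⁻¹ (Or.inr (by positivity))).tendsto.comp h1
        simpa [Function.comp_def, Real.zero_rpow (by positivity : α⁻¹ ≠ 0)] using this)
      (fun n p => closedBall p.1.1 p.1.2)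
      ?_ ?_
    · refine le_antisymm ?_ (by simp)
      refine le_trans key ?_
      have hle : ∀ n : ℕ, (∑ p : {p // p ∈ F n}, EMetric.diam (closedBall p.1.1 p.1.2) ^ α)
          ≤ ENNReal.ofReal (((n : ℝ) + 1)⁻¹) := by
        intro n
        have h1 : ∀ p : {p // p ∈ F n}, EMetric.diam (closedBall p.1.1 p.1.2) ^ α
            ≤ ENNReal.ofReal ((2 * p.1.2) ^ α) := by
          intro p
          have hd : EMetric.diam (closedBall p.1.1 p.1.2) ≤ ENNReal.ofReal (2 * p.1.2) := by
            apply EMetric.diam_le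
            intro x hx y hy
            rw [edist_dist]
            apply ENNReal.ofReal_le_ofReal
            calc dist x y ≤ dist x p.1.1 + dist p.1.1 y := dist_triangle _ _ _
              _ ≤ p.1.2 + p.1.2 := by
                  rw [mem_closedBall] at hx hy
                  rw [dist_comm] at hy
                  linarith
              _ = 2 * p.1.2 := by ring
          calc EMetric.diam (closedBall p.1.1 p.1.2) ^ α
              ≤ (ENNReal.ofReal (2 * p.1.2)) ^ α := ENNReal.rpow_le_rpow hd hα0.le
            _ = ENNReal.ofReal ((2 * p.1.2) ^ α) :=
              ENNReal.ofReal_rpow_of_nonneg (by linarith [hF1 n p.1 p.2]) hα0.le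
        calc (∑ p : {p // p ∈ F n}, EMetric.diam (closedBall p.1.1 p.1.2) ^ α)
            ≤ ∑ p : {p // p ∈ F n}, ENNReal.ofReal ((2 * p.1.2) ^ α) :=
              Finset.sum_le_sum (fun p _ => h1 p)
          _ = ENNReal.ofReal (∑ p : {p // p ∈ F n}, (2 * p.1.2) ^ α) :=
              (ENNReal.ofReal_sum_of_nonneg (fun p _ => by
                have := hF1 n p.1 p.2
                positivity)).symm
          _ ≤ ENNReal.ofReal (((n : ℝ) + 1)⁻¹) := by
              apply ENNReal.ofReal_le_ofReal
              rw [Finset.sum_coe_sort (F n) (fun p => (2 * p.2) ^ α)]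
              exact (hF3 n).le
      have h2 : Filter.liminf
          (fun n : ℕ => ∑ p : {p // p ∈ F n}, EMetric.diam (closedBall p.1.1 p.1.2) ^ α)
          Filter.atTop ≤ Filter.liminf (fun n : ℕ => ENNReal.ofReal (((n : ℝ) + 1)⁻¹))
          Filter.atTop := Filter.liminf_le_liminf (Filter.Eventually.of_forall hle)
      refine h2.trans ?_
      have h3 : Filter.Tendsto (fun n : ℕ => ENNReal.ofReal (((n : ℝ) + 1)⁻¹)) Filter.atTop
          (nhds 0) := by
        rw [← ENNReal.ofReal_zero]
        apply ENNReal.tendsto_ofReal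
        simpa [one_div] using (tendsto_one_div_add_atTop_nhds_zero_nat : Filter.Tendsto (fun n : ℕ => 1 / ((n : ℝ) + 1)) Filter.atTop (nhds 0))
      rw [h3.liminf_eq]
    · apply Filter.Eventually.of_forall
      intro n p
      have hp2 : 0 ≤ p.1.2 := hF1 n p.1 p.2
      have hterm : (2 * p.1.2) ^ α < ((n : ℝ) + 1)⁻¹ := by
        refine lt_of_le_of_lt ?_ (hF3 n)
        refine Finset.single_le_sum (f := fun q : EuclideanSpace ℝ (Fin d') × ℝ => (2 * q.2) ^ α) (fun q hq => ?_) p.2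
        have := hF1 n q hq
        positivity
      have h2t : 2 * p.1.2 ≤ (((n : ℝ) + 1)⁻¹) ^ α⁻¹ := by
        have := Real.rpow_le_rpow (by positivity) hterm.le (by positivity : (0:ℝ) ≤ α⁻¹)
        rwa [Real.rpow_rpow_inv (by linarith) hα0.ne'] at this
      have hd : EMetric.diam (closedBall p.1.1 p.1.2) ≤ ENNReal.ofReal (2 * p.1.2) := by
        apply EMetric.diam_le
        intro x hx y hy
        rw [edist_dist]
        apply ENNReal.ofReal_le_ofReal
        calc dist x y ≤ dist x p.1.1 + dist p.1.1 y := dist_triangle _ _ _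
          _ ≤ p.1.2 + p.1.2 := by
              rw [mem_closedBall] at hx hy
              rw [dist_comm] at hy
              linarith
          _ = 2 * p.1.2 := by ring
      exact hd.trans (ENNReal.ofReal_le_ofReal h2t)
    · apply Filter.Eventually.of_forall
      intro n
      intro y hy
      obtain ⟨p, hp, hyp⟩ := Set.mem_iUnion₂.1 (hF2 n hy)
      exact Set.mem_iUnion.2 ⟨⟨p, hp⟩, hyp⟩
  exact absurd hzero hHα.ne'
open Metric
open scoped Classical


lemma aux_cover {E : Type*} [MetricSpace E] {N : ℕ} (x : Fin N → E) (t : ℝ)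
    (m : ℕ) (hm : 1 ≤ m) :
    ∀ (n : ℕ) (J : Finset (Fin N)), J.card ≤ n →
      ∀ G : Set E, (∀ y ∈ G, m ≤ (J.filter (fun j => dist y (x j) ≤ t)).card) →
      ∃ F : Finset (E × ℝ), (∀ p ∈ F, p.2 = 2 * t) ∧ m * F.card ≤ J.card ∧
        G ⊆ ⋃ p ∈ F, closedBall p.1 p.2 := by
  intro n
  induction n with
  | zero =>
    intro J hJ G hG
    refine ⟨∅, by simp, by simp, ?_⟩
    intro y hy
    have h1 := hG y hy
    have h2 : (J.filter (fun j => dist y (x j) ≤ t)).card ≤ J.card :=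
      Finset.card_le_card (Finset.filter_subset _ _)
    omega
  | succ n ih =>
    intro J hJ G hG
    rcases Set.eq_empty_or_nonempty G with hGe | ⟨y₀, hy₀⟩
    · exact ⟨∅, by simp, by simp, by simp [hGe]⟩
    · set J' := J.filter (fun j => ¬ dist y₀ (x j) ≤ t) with hJ'def
      have hsplit : (J.filter (fun j => dist y₀ (x j) ≤ t)).card + J'.card = J.card :=
        Finset.card_filter_add_card_filter_not _
      have hcnt := hG y₀ hy₀
      have hJ'm : J'.card + m ≤ J.card := by omega
      have hJ'le : J'.card ≤ n := by omega
      have hG' : ∀ y ∈ G \ closedBall y₀ (2 * t),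
          m ≤ (J'.filter (fun j => dist y (x j) ≤ t)).card := by
        intro y hy
        refine le_trans (hG y hy.1) (Finset.card_le_card ?_)
        intro j hj
        rw [Finset.mem_filter] at hj ⊢
        refine ⟨Finset.mem_filter.2 ⟨hj.1, ?_⟩, hj.2⟩
        have hyy₀ : 2 * t < dist y₀ y := by
          have := hy.2
          rw [mem_closedBall, dist_comm] at this
          linarith [not_le.1 this]
        have htri : dist y₀ y ≤ dist y₀ (x j) + dist y (x j) := by
          rw [dist_comm y (x j)]
          exact dist_triangle _ _ _
        intro hc
        have := hj.2
        linarith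
      obtain ⟨F', hF'1, hF'2, hF'3⟩ := ih J' hJ'le _ hG'
      refine ⟨insert (y₀, 2 * t) F', ?_, ?_, ?_⟩
      · intro p hp
        rcases Finset.mem_insert.1 hp with h | h
        · rw [h]
        · exact hF'1 p h
      · calc m * (insert (y₀, 2 * t) F').card ≤ m * (F'.card + 1) :=
            Nat.mul_le_mul_left m (Finset.card_insert_le _ _)
          _ = m * F'.card + m := by ring
          _ ≤ J'.card + m := by omega
          _ ≤ J.card := hJ'm
      · intro y hy
        by_cases hc : y ∈ closedBall y₀ (2 * t)
        · exact Set.mem_biUnion (Finset.mem_insert_self _ _) hc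
        · obtain ⟨p, hp, hyp⟩ := Set.mem_iUnion₂.1 (hF'3 ⟨hy, hc⟩)
          exact Set.mem_biUnion (Finset.mem_insert_of_mem hp) hyp


lemma aux_sum_union_le {ι : Type*} [DecidableEq ι] (s t : Finset ι) (f : ι → ℝ)
    (hf : ∀ i ∈ s ∩ t, 0 ≤ f i) : ∑ i ∈ s ∪ t, f i ≤ ∑ i ∈ s, f i + ∑ i ∈ t, f i := by
  rw [← Finset.sum_union_inter]
  have h0 : 0 ≤ ∑ i ∈ s ∩ t, f i := Finset.sum_nonneg hf
  linarith

lemma aux_sum_biUnion_le {ι κ : Type*} [DecidableEq ι] [DecidableEq κ] (s : Finset ι)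
    (t : ι → Finset κ) (f : κ → ℝ) (hf : ∀ j ∈ s.biUnion t, 0 ≤ f j) :
    ∑ i ∈ s.biUnion t, f i ≤ ∑ i ∈ s, ∑ j ∈ t i, f j := by
  induction s using Finset.induction_on with
  | empty => simp
  | @insert a s' ha ih =>
      have hf' : ∀ j ∈ t a ∪ s'.biUnion t, 0 ≤ f j := by
        intro j hj
        apply hf j
        rw [Finset.biUnion_insert]
        exact hj
      rw [Finset.biUnion_insert]
      rw [Finset.sum_insert ha]
      have h1 := aux_sum_union_le (t a) (s'.biUnion t) f
        (fun i hi => hf' i (Finset.mem_union_left _ (Finset.mem_inter.1 hi).1))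
      have h2 := ih (fun j hj => hf' j (Finset.mem_union_right _ hj))
      linarith
lemma aux_select {d' : ℕ} (α s : ℝ) (hα0 : 0 < α) (hs : α < s)
    (A : Set (EuclideanSpace ℝ (Fin d'))) (hA : IsCompact A) (hHα : 0 < μH[α] A) :
    ∃ c₀ C : ℝ, 0 < c₀ ∧ 0 < C ∧ ∀ (N n : ℕ), 1 ≤ n →
      ∀ (x : Fin N → EuclideanSpace ℝ (Fin d')) (J : Finset (Fin N)),
        J.card ≤ n → (∀ j ∈ J, x j ∈ A) →
        ∃ y ∈ A, (∀ j ∈ J, c₀ * (n : ℝ) ^ (-(1/α)) < dist y (x j)) ∧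
          ∑ j ∈ J, (dist y (x j)) ^ (-s) ≤ C * (n : ℝ) ^ (s/α) := by
  obtain ⟨h, hh, hcontent⟩ := aux_content α hα0 A hHα
  have hgeom : ∀ q : ℝ, 0 ≤ q → q < 1 → ∀ K : ℕ,
      ∑ k ∈ Finset.range K, q ^ k ≤ (1 - q)⁻¹ := by
    intro q hq0 hq1 K
    have h1q : (0:ℝ) < 1 - q := by linarith
    have he : ∑ k ∈ Finset.range K, q ^ k = (1 - q ^ K) / (1 - q) := by
      rw [geom_sum_eq (by linarith : q ≠ 1) K]
      rw [div_eq_div_iff (by linarith) (by linarith)]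
      ring
    rw [he, ← one_div, div_le_div_iff₀ h1q h1q]
    nlinarith [pow_nonneg hq0 K]
  have hpow2 : ∀ (a : ℝ) (k : ℕ), ((2:ℝ) ^ k) ^ a = ((2:ℝ) ^ a) ^ k := by
    intro a k
    rw [← Real.rpow_natCast (2:ℝ) k, ← Real.rpow_natCast ((2:ℝ) ^ a) k,
      ← Real.rpow_mul (by norm_num : (0:ℝ) ≤ 2), ← Real.rpow_mul (by norm_num : (0:ℝ) ≤ 2),
      mul_comm]
  set σ := (α + s) / 2 with hσdef
  have hσ1 : α < σ := by rw [hσdef]; linarith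
  have hσ2 : σ < s := by rw [hσdef]; linarith
  set b := (2:ℝ) ^ σ with hbdef
  have hb0 : 0 < b := Real.rpow_pos_of_pos two_pos σ
  set g := (2:ℝ) ^ α with hgdef
  have hg0 : 0 < g := Real.rpow_pos_of_pos two_pos α
  set q := (2:ℝ) ^ (α - σ) with hqdef
  have hq0 : 0 < q := Real.rpow_pos_of_pos two_pos _
  have hq1 : q < 1 := Real.rpow_lt_one_of_one_lt_of_neg one_lt_two (by linarith)
  set q' := (2:ℝ) ^ (σ - s) with hq'def
  have hq'0 : 0 < q' := Real.rpow_pos_of_pos two_pos _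
  have hq'1 : q' < 1 := Real.rpow_lt_one_of_one_lt_of_neg one_lt_two (by linarith)
  set P := (1 - q)⁻¹ with hPdef
  have hP0 : 0 < P := by rw [hPdef]; exact inv_pos.2 (by linarith)
  set P' := (1 - q')⁻¹ with hP'def
  have hP'0 : 0 < P' := by rw [hP'def]; exact inv_pos.2 (by linarith)
  set e8 := (8:ℝ) ^ α with he8def
  have he80 : 0 < e8 := Real.rpow_pos_of_pos (by norm_num) α
  set c₀ := min 1 ((h / (2 * g)) ^ α⁻¹) with hc₀def
  have hc₀0 : 0 < c₀ :=
    lt_min one_pos (Real.rpow_pos_of_pos (div_pos hh (mul_pos two_pos hg0)) _)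
  have hc₀α : c₀ ^ α ≤ h / (2 * g) := by
    calc c₀ ^ α ≤ ((h / (2 * g)) ^ α⁻¹) ^ α :=
          Real.rpow_le_rpow hc₀0.le (min_le_right _ _) hα0.le
      _ = h / (2 * g) := Real.rpow_inv_rpow (div_pos hh (mul_pos two_pos hg0)).le hα0.ne'
  have hc₀α0 : 0 < c₀ ^ α := Real.rpow_pos_of_pos hc₀0 α
  set β := max 1 (4 * e8 * c₀ ^ α * P / h) with hβdef
  have hβ1 : (1:ℝ) ≤ β := le_max_left _ _
  have hβ0 : 0 < β := lt_of_lt_of_le one_pos hβ1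
  have hβkey : e8 * c₀ ^ α * P / β ≤ h / 4 := by
    have h4 : 4 * e8 * c₀ ^ α * P / h ≤ β := le_max_right _ _
    have h5 : 4 * e8 * c₀ ^ α * P ≤ β * h := (div_le_iff₀ hh).1 h4
    rw [div_le_div_iff₀ hβ0 (by norm_num : (0:ℝ) < 4)]
    linarith
  have hcs0 : 0 < c₀ ^ (-s) := Real.rpow_pos_of_pos hc₀0 _
  refine ⟨c₀, β * P' * c₀ ^ (-s), hc₀0, by positivity, ?_⟩
  intro N n hn x J hJcard hxA
  have hn0 : (0:ℝ) < (n:ℝ) := by exact_mod_cast hn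
  set r := c₀ * (n : ℝ) ^ (-(1/α)) with hrdef
  have hr0 : 0 < r := mul_pos hc₀0 (Real.rpow_pos_of_pos hn0 _)
  have hrα : (n:ℝ) * r ^ α = c₀ ^ α := by
    rw [hrdef, Real.mul_rpow hc₀0.le (Real.rpow_nonneg hn0.le _),
      ← Real.rpow_mul hn0.le]
    have he : (-(1/α)) * α = -1 := by field_simp
    rw [he, Real.rpow_neg_one]
    field_simp
  obtain ⟨D, hD⟩ := Metric.isBounded_iff.1 hA.isBounded
  obtain ⟨K, hK⟩ := pow_unbounded_of_one_lt (D / r) (one_lt_two (α := ℝ))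
  have hDK : D < 2 ^ K * r := by
    rw [div_lt_iff₀ hr0] at hK
    linarith
  set mk : ℕ → ℕ := fun k => ⌈β * b ^ k⌉₊ with hmkdef
  have hmk1 : ∀ k, 1 ≤ mk k := fun k =>
    Nat.one_le_ceil_iff.2 (mul_pos hβ0 (pow_pos hb0 k))
  have hmkge : ∀ k, β * b ^ k ≤ (mk k : ℝ) := fun k => Nat.le_ceil _
  have hgood : ∃ y ∈ A, (∀ j ∈ J, r < dist y (x j)) ∧
      ∀ k ∈ Finset.range (K+1),
        ((J.filter (fun j => dist y (x j) ≤ 2 ^ (k+1) * r)).card : ℝ) ≤ β * b ^ k := by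
    by_contra hcon
    push_neg at hcon
    choose Fk hFk1 hFk2 hFk3 using fun k : ℕ =>
      aux_cover x (2 ^ (k+1) * r) (mk k) (hmk1 k) J.card J le_rfl
        {y | mk k ≤ (J.filter (fun j => dist y (x j) ≤ 2 ^ (k+1) * r)).card}
        (fun y hy => hy)
    set bigF := (J.image (fun j => (x j, r))) ∪ (Finset.range (K+1)).biUnion Fk with hbigF
    have hnonneg : ∀ p ∈ bigF, 0 ≤ p.2 := by
      intro p hp
      rcases Finset.mem_union.1 hp with hp | hp
      · obtain ⟨j, hjJ, rfl⟩ := Finset.mem_image.1 hp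
        exact hr0.le
      · obtain ⟨k, hk, hpk⟩ := Finset.mem_biUnion.1 hp
        rw [hFk1 k p hpk]
        positivity
    have hcov : A ⊆ ⋃ p ∈ bigF, closedBall p.1 p.2 := by
      intro y hyA
      by_cases hnear : ∀ j ∈ J, r < dist y (x j)
      · obtain ⟨k, hkmem, hkbad⟩ := hcon y hyA hnear
        have hmem : y ∈ {y | mk k ≤
            (J.filter (fun j => dist y (x j) ≤ 2 ^ (k+1) * r)).card} := by
          simp only [Set.mem_setOf_eq, hmkdef]
          exact Nat.ceil_le.2 hkbad.le
        obtain ⟨p, hp, hyp⟩ := Set.mem_iUnion₂.1 (hFk3 k hmem)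
        exact Set.mem_biUnion (Finset.mem_union_right _
          (Finset.mem_biUnion.2 ⟨k, hkmem, hp⟩)) hyp
      · push_neg at hnear
        obtain ⟨j, hjJ, hjle⟩ := hnear
        exact Set.mem_biUnion (Finset.mem_union_left _ (Finset.mem_image_of_mem _ hjJ))
          (mem_closedBall.2 hjle)
    have hcb := hcontent bigF hnonneg hcov
    have hsum1 : ∑ p ∈ bigF, (2 * p.2) ^ α ≤
        (∑ p ∈ J.image (fun j => (x j, r)), (2 * p.2) ^ α)
        + ∑ k ∈ Finset.range (K+1), ∑ p ∈ Fk k, (2 * p.2) ^ α := by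
      have hnn : ∀ p ∈ bigF, 0 ≤ (2 * p.2 : ℝ) ^ α := by
        intro p hp
        have := hnonneg p hp
        exact Real.rpow_nonneg (by linarith) _
      refine le_trans (aux_sum_union_le _ _ _ (fun p hp => hnn p ?_)) ?_
      · exact Finset.mem_union_left _ (Finset.mem_inter.1 hp).1
      · refine add_le_add (le_refl _) (aux_sum_biUnion_le _ _ _ (fun p hp => hnn p ?_))
        exact Finset.mem_union_right _ hp
    have hnear_sum : ∑ p ∈ J.image (fun j => (x j, r)), (2 * p.2) ^ α
        ≤ (n:ℝ) * (2 * r) ^ α := by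
      have hc : ∀ p ∈ J.image (fun j => (x j, r)), (2 * p.2 : ℝ) ^ α = (2 * r) ^ α := by
        intro p hp
        obtain ⟨j, _, rfl⟩ := Finset.mem_image.1 hp
        rfl
      rw [Finset.sum_congr rfl hc, Finset.sum_const, nsmul_eq_mul]
      have hcard : (((J.image (fun j => (x j, r))).card : ℕ) : ℝ) ≤ (n:ℝ) := by
        exact_mod_cast le_trans Finset.card_image_le hJcard
      exact mul_le_mul_of_nonneg_right hcard (Real.rpow_nonneg (by linarith) _)
    have hFk_sum : ∀ k ∈ Finset.range (K+1),
        ∑ p ∈ Fk k, (2 * p.2) ^ α ≤ (c₀ ^ α * e8 / β) * q ^ k := by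
      intro k _
      have h23 : (2 : ℝ) * (2 * (2 ^ (k+1) * r)) = 2 ^ (k+3) * r := by ring
      have hc : ∀ p ∈ Fk k, (2 * p.2 : ℝ) ^ α = ((2:ℝ) ^ (k+3) * r) ^ α := by
        intro p hp
        rw [hFk1 k p hp, h23]
      rw [Finset.sum_congr rfl hc, Finset.sum_const, nsmul_eq_mul]
      have hXnn : (0:ℝ) ≤ ((2:ℝ) ^ (k+3) * r) ^ α := Real.rpow_nonneg (by positivity) _
      have hcard : ((Fk k).card : ℝ) ≤ (n:ℝ) / (β * b ^ k) := by
        rw [le_div_iff₀ (mul_pos hβ0 (pow_pos hb0 k))]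
        have h1 : (mk k : ℝ) * ((Fk k).card : ℝ) ≤ (J.card : ℝ) := by
          exact_mod_cast hFk2 k
        have h2 : ((J.card : ℕ) : ℝ) ≤ (n:ℝ) := by exact_mod_cast hJcard
        have h3 : β * b ^ k * ((Fk k).card : ℝ) ≤ (mk k : ℝ) * ((Fk k).card : ℝ) :=
          mul_le_mul_of_nonneg_right (hmkge k) (Nat.cast_nonneg _)
        linarith
      have hX : ((2:ℝ) ^ (k+3) * r) ^ α = g ^ k * e8 * r ^ α := by
        have e1 : ((2:ℝ) ^ (k+3) * r) ^ α = ((2:ℝ) ^ (k+3)) ^ α * r ^ α :=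
          Real.mul_rpow (by positivity) hr0.le
        have e2 : ((2:ℝ) ^ (k+3) : ℝ) = (2:ℝ) ^ k * 8 := by ring
        have e3 : (((2:ℝ) ^ k * 8 : ℝ)) ^ α = ((2:ℝ) ^ k) ^ α * e8 := by
          rw [Real.mul_rpow (by positivity) (by norm_num), he8def]
        rw [e1, e2, e3, hpow2 α k, ← hgdef]
      have hqk : q ^ k = g ^ k / b ^ k := by
        have : q = g / b := by
          rw [hqdef, hgdef, hbdef, ← Real.rpow_sub two_pos]
        rw [this, div_pow]
      calc ((Fk k).card : ℝ) * ((2:ℝ) ^ (k+3) * r) ^ α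
          ≤ ((n:ℝ) / (β * b ^ k)) * ((2:ℝ) ^ (k+3) * r) ^ α :=
            mul_le_mul_of_nonneg_right hcard hXnn
        _ = ((n:ℝ) * r ^ α) * e8 / β * (g ^ k / b ^ k) := by
            rw [hX]
            field_simp
        _ = (c₀ ^ α * e8 / β) * q ^ k := by rw [hrα, hqk]
    have htotal : ∑ p ∈ bigF, (2 * p.2) ^ α ≤ h / 2 + h / 4 := by
      have h2r : (n:ℝ) * (2 * r) ^ α ≤ h / 2 := by
        have e1 : ((2:ℝ) * r) ^ α = g * r ^ α := by
          rw [Real.mul_rpow (by norm_num) hr0.le, hgdef]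
        have e2 : (n:ℝ) * ((2:ℝ) * r) ^ α = g * (n * r ^ α) := by rw [e1]; ring
        rw [e2, hrα]
        have := mul_le_mul_of_nonneg_left hc₀α hg0.le
        calc g * c₀ ^ α ≤ g * (h / (2 * g)) := this
          _ = h / 2 := by rw [mul_div_assoc', mul_comm (2:ℝ) g, mul_div_mul_left h 2 hg0.ne']
      have hgeo : ∑ k ∈ Finset.range (K+1), (c₀ ^ α * e8 / β) * q ^ k ≤ h / 4 := by
        rw [← Finset.mul_sum]
        have h1 : ∑ k ∈ Finset.range (K+1), q ^ k ≤ P := by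
          rw [hPdef]; exact hgeom q hq0.le hq1 _
        have h2 : (0:ℝ) ≤ c₀ ^ α * e8 / β := by positivity
        calc (c₀ ^ α * e8 / β) * ∑ k ∈ Finset.range (K+1), q ^ k
            ≤ (c₀ ^ α * e8 / β) * P := mul_le_mul_of_nonneg_left h1 h2
          _ = e8 * c₀ ^ α * P / β := by ring
          _ ≤ h / 4 := hβkey
      have h3 : ∑ k ∈ Finset.range (K+1), ∑ p ∈ Fk k, (2 * p.2) ^ α
          ≤ ∑ k ∈ Finset.range (K+1), (c₀ ^ α * e8 / β) * q ^ k :=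
        Finset.sum_le_sum hFk_sum
      exact le_trans hsum1 (add_le_add (le_trans hnear_sum h2r) (le_trans h3 hgeo))
    linarith only [hcb, htotal, hh]
  obtain ⟨y, hyA, hy1, hy2⟩ := hgood
  refine ⟨y, hyA, hy1, ?_⟩
  have hPj : ∀ j ∈ J, ∃ k : ℕ, dist y (x j) ≤ 2 ^ (k+1) * r := by
    intro j hj
    refine ⟨K, ?_⟩
    have h1 : dist y (x j) ≤ D := hD hyA (hxA j hj)
    have h3 : (0:ℝ) < 2 ^ K * r := mul_pos (pow_pos two_pos K) hr0
    have h4 : (2:ℝ) ^ (K+1) * r = 2 * (2 ^ K * r) := by ring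
    rw [h4]
    linarith only [hDK, h1, h3]
  set kj : Fin N → ℕ := fun j =>
    if hp : ∃ k : ℕ, dist y (x j) ≤ 2 ^ (k+1) * r then Nat.find hp else 0 with hkjdef
  have hkj_eq : ∀ j (hj : j ∈ J), kj j = Nat.find (hPj j hj) := by
    intro j hj
    rw [hkjdef]
    simp only [dif_pos (hPj j hj)]
  have hkj_spec : ∀ j (hj : j ∈ J), dist y (x j) ≤ 2 ^ (kj j + 1) * r := by
    intro j hj
    rw [hkj_eq j hj]
    exact Nat.find_spec (hPj j hj)
  have hkj_le : ∀ j (hj : j ∈ J), kj j ≤ K := by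
    intro j hj
    rw [hkj_eq j hj]
    apply Nat.find_le
    have h1 : dist y (x j) ≤ D := hD hyA (hxA j hj)
    have h3 : (0:ℝ) < 2 ^ K * r := mul_pos (pow_pos two_pos K) hr0
    have h4 : (2:ℝ) ^ (K+1) * r = 2 * (2 ^ K * r) := by ring
    rw [h4]
    linarith only [hDK, h1, h3]
  have hkj_low : ∀ j (hj : j ∈ J), 2 ^ (kj j) * r < dist y (x j) := by
    intro j hj
    rcases Nat.eq_zero_or_eq_succ_pred (kj j) with h0 | hsucc
    · rw [h0]
      simpa using hy1 j hj
    · have hlt : kj j - 1 < Nat.find (hPj j hj) := by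
        rw [← hkj_eq j hj]; omega
      have hm := Nat.find_min (hPj j hj) hlt
      push_neg at hm
      have heq : kj j - 1 + 1 = kj j := by omega
      rwa [heq] at hm
  have hfib := Finset.sum_fiberwise_of_maps_to (g := kj) (t := Finset.range (K+1))
    (fun j hj => Finset.mem_range.2 (Nat.lt_succ_of_le (hkj_le j hj)))
    (fun j => dist y (x j) ^ (-s))
  rw [← hfib]
  have hinner : ∀ k ∈ Finset.range (K+1),
      ∑ j ∈ J.filter (fun j => kj j = k), dist y (x j) ^ (-s)
        ≤ (β * b ^ k) * ((2:ℝ) ^ k * r) ^ (-s) := by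
    intro k hk
    have hXnn : (0:ℝ) ≤ ((2:ℝ) ^ k * r) ^ (-s) := Real.rpow_nonneg (by positivity) _
    have hterm : ∀ j ∈ J.filter (fun j => kj j = k),
        dist y (x j) ^ (-s) ≤ ((2:ℝ) ^ k * r) ^ (-s) := by
      intro j hj
      rw [Finset.mem_filter] at hj
      have hlow := hkj_low j hj.1
      rw [hj.2] at hlow
      exact Real.rpow_le_rpow_of_nonpos (by positivity) hlow.le (by linarith)
    have h1 := Finset.sum_le_card_nsmul _ _ _ hterm
    rw [nsmul_eq_mul] at h1
    refine le_trans h1 (mul_le_mul_of_nonneg_right ?_ hXnn)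
    have hsub : J.filter (fun j => kj j = k) ⊆
        J.filter (fun j => dist y (x j) ≤ 2 ^ (k+1) * r) := by
      intro j hj
      rw [Finset.mem_filter] at hj ⊢
      refine ⟨hj.1, ?_⟩
      have := hkj_spec j hj.1
      rwa [hj.2] at this
    calc ((J.filter (fun j => kj j = k)).card : ℝ)
        ≤ ((J.filter (fun j => dist y (x j) ≤ 2 ^ (k+1) * r)).card : ℝ) := by
          exact_mod_cast Finset.card_le_card hsub
      _ ≤ β * b ^ k := hy2 k hk
  calc ∑ k ∈ Finset.range (K+1), ∑ j ∈ J.filter (fun j => kj j = k), dist y (x j) ^ (-s)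
      ≤ ∑ k ∈ Finset.range (K+1), (β * b ^ k) * ((2:ℝ) ^ k * r) ^ (-s) :=
        Finset.sum_le_sum hinner
    _ = β * r ^ (-s) * ∑ k ∈ Finset.range (K+1), q' ^ k := by
        rw [Finset.mul_sum]
        refine Finset.sum_congr rfl fun k _ => ?_
        have h1 : ((2:ℝ) ^ k * r) ^ (-s) = ((2:ℝ) ^ k) ^ (-s) * r ^ (-s) :=
          Real.mul_rpow (by positivity) hr0.le
        have h2 : ((2:ℝ) ^ k) ^ (-s) = ((2:ℝ) ^ (-s)) ^ k := hpow2 (-s) k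
        have h3 : b ^ k * ((2:ℝ) ^ (-s)) ^ k = q' ^ k := by
          rw [← mul_pow]
          congr 1
          rw [hbdef, hq'def, ← Real.rpow_add two_pos]
          ring_nf
        calc (β * b ^ k) * ((2:ℝ) ^ k * r) ^ (-s)
            = β * r ^ (-s) * (b ^ k * ((2:ℝ) ^ (-s)) ^ k) := by rw [h1, h2]; ring
          _ = β * r ^ (-s) * q' ^ k := by rw [h3]
    _ ≤ β * r ^ (-s) * P' := by
        refine mul_le_mul_of_nonneg_left ?_ ?_
        · rw [hP'def]; exact hgeom q' hq'0.le hq'1 _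
        · exact mul_nonneg hβ0.le (Real.rpow_nonneg hr0.le _)
    _ = (β * P' * c₀ ^ (-s)) * (n:ℝ) ^ (s/α) := by
        rw [hrdef, Real.mul_rpow hc₀0.le (Real.rpow_nonneg hn0.le _),
          ← Real.rpow_mul hn0.le]
        have he : (-(1/α)) * (-s) = s/α := by ring
        rw [he]
        ring
noncomputable def stmt9Energy {d' : ℕ} (s : ℝ)
    (w : EuclideanSpace ℝ (Fin d') → EuclideanSpace ℝ (Fin d') → ℝ)
    {N : ℕ} (x : Fin N → EuclideanSpace ℝ (Fin d')) : ℝ :=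
  ∑ i, ∑ j ∈ Finset.univ.erase i, w (x i) (x j) / dist (x i) (x j) ^ s

theorem stmt_9 (d' : ℕ) (α s : ℝ) (hα0 : 0 < α) (hαd : α ≤ d') (hs : α < s)
    (A : Set (EuclideanSpace ℝ (Fin d'))) (hA : IsCompact A)
    (hHα : 0 < μH[α] A)
    (w : EuclideanSpace ℝ (Fin d') → EuclideanSpace ℝ (Fin d') → ℝ)
    (hw0 : ∀ x y, 0 ≤ w x y) (hwsym : ∀ x y, w x y = w y x)
    (hwbdd : ∃ W : ℝ, ∀ x ∈ A, ∀ y ∈ A, w x y ≤ W)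
    (hlsc : LowerSemicontinuousOn (fun p : EuclideanSpace ℝ (Fin d') × EuclideanSpace ℝ (Fin d') =>
      w p.1 p.2) (A ×ˢ A))
    (η ρ : ℝ) (hη : 0 < η) (hρ : 0 < ρ)
    (hdiag : ∀ x ∈ A, ∀ y ∈ A, dist x y < ρ → η ≤ w x y) :
    ∃ c : ℝ, 0 < c ∧ ∀ (N : ℕ), 2 ≤ N →
      ∀ x : Fin N → EuclideanSpace ℝ (Fin d'),
        Function.Injective x → (∀ i, x i ∈ A) →
        (∀ y : Fin N → EuclideanSpace ℝ (Fin d'),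
          Function.Injective y → (∀ i, y i ∈ A) → stmt9Energy s w x ≤ stmt9Energy s w y) →
        ∀ i j, i ≠ j → c * (N : ℝ) ^ (-(1 / α)) ≤ dist (x i) (x j) := by
  have hs0 : 0 < s := lt_trans hα0 hs
  obtain ⟨W₀, hW₀⟩ := hwbdd
  set W := max W₀ 1 with hWdef
  have hW0 : (0:ℝ) < W := lt_of_lt_of_le one_pos (le_max_right _ _)
  have hWb : ∀ a ∈ A, ∀ b ∈ A, w a b ≤ W :=
    fun a ha b hb => (hW₀ a ha b hb).trans (le_max_left _ _)
  obtain ⟨c₀, C, hc₀0, hC0, hsel⟩ := aux_select α s hα0 hs A hA hHα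
  set c := min ρ ((η / (W * C)) ^ s⁻¹) with hcdef
  have hc0 : 0 < c := lt_min hρ (Real.rpow_pos_of_pos (div_pos hη (mul_pos hW0 hC0)) _)
  refine ⟨c, hc0, ?_⟩
  intro N hN x hinj hxA hmin i j hij
  have hN0 : (0:ℝ) < (N:ℝ) := by
    have : (0:ℕ) < N := by omega
    exact_mod_cast this
  have hN1 : (1:ℝ) ≤ (N:ℝ) := by
    have : (1:ℕ) ≤ N := by omega
    exact_mod_cast this
  have hNpow : (N:ℝ) ^ (-(1/α)) ≤ 1 :=
    Real.rpow_le_one_of_one_le_of_nonpos hN1 (by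
      have : 0 < 1/α := by positivity
      linarith)
  have hNpow0 : (0:ℝ) < (N:ℝ) ^ (-(1/α)) := Real.rpow_pos_of_pos hN0 _
  set δ := dist (x i) (x j) with hδdef
  have hδ0 : 0 < δ := by
    rw [hδdef, dist_pos]
    exact fun hc => hij (hinj hc)
  by_cases hδρ : ρ ≤ δ
  · calc c * (N:ℝ) ^ (-(1/α)) ≤ ρ * 1 :=
        mul_le_mul (min_le_left _ _) hNpow hNpow0.le hρ.le
      _ = ρ := mul_one ρ
      _ ≤ δ := hδρ
  · push_neg at hδρ
    obtain ⟨y, hyA, hy1, hy2⟩ := hsel N N (by omega) x (Finset.univ.erase i)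
      (by
        rw [Finset.card_erase_of_mem (Finset.mem_univ i), Finset.card_univ, Fintype.card_fin]
        omega)
      (fun b _ => hxA b)
    have hydist : ∀ b, b ≠ i → 0 < dist y (x b) := by
      intro b hb
      have := hy1 b (Finset.mem_erase.2 ⟨hb, Finset.mem_univ b⟩)
      nlinarith [mul_pos hc₀0 hNpow0]
    set x' := Function.update x i y with hx'def
    have hx'i : x' i = y := Function.update_self i y x
    have hx'b : ∀ b, b ≠ i → x' b = x b := fun b hb => Function.update_of_ne hb y x
    have hx'inj : Function.Injective x' := by
      intro a b hab
      by_cases ha : a = i <;> by_cases hb : b = i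
      · rw [ha, hb]
      · exfalso
        rw [ha, hx'i, hx'b b hb] at hab
        exact (hydist b hb).ne' (by rw [hab]; exact dist_self _)
      · exfalso
        rw [hb, hx'i, hx'b a ha] at hab
        exact (hydist a ha).ne' (by rw [← hab]; exact dist_self _)
      · rw [hx'b a ha, hx'b b hb] at hab
        exact hinj hab
    have hx'A : ∀ k, x' k ∈ A := by
      intro k
      by_cases hk : k = i
      · rw [hk, hx'i]; exact hyA
      · rw [hx'b k hk]; exact hxA k
    have hmle := hmin x' hx'inj hx'A
    -- decomposition of the energy
    have hdecomp : ∀ z : Fin N → EuclideanSpace ℝ (Fin d'), stmt9Energy s w z =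
        (∑ b ∈ Finset.univ.erase i, w (z i) (z b) / dist (z i) (z b) ^ s)
        + ((∑ a ∈ Finset.univ.erase i, w (z a) (z i) / dist (z a) (z i) ^ s)
        + ∑ a ∈ Finset.univ.erase i, ∑ b ∈ (Finset.univ.erase a).erase i,
            w (z a) (z b) / dist (z a) (z b) ^ s) := by
      intro z
      rw [stmt9Energy, ← Finset.add_sum_erase _ _ (Finset.mem_univ i)]
      congr 1
      rw [← Finset.sum_add_distrib]
      refine Finset.sum_congr rfl fun a ha => ?_
      have hai : i ∈ Finset.univ.erase a :=
        Finset.mem_erase.2 ⟨fun hia => (Finset.mem_erase.1 ha).1 hia.symm, Finset.mem_univ i⟩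
      rw [← Finset.add_sum_erase _ _ hai]
    have hsymmx : ∀ z : Fin N → EuclideanSpace ℝ (Fin d'),
        ∑ a ∈ Finset.univ.erase i, w (z a) (z i) / dist (z a) (z i) ^ s
          = ∑ a ∈ Finset.univ.erase i, w (z i) (z a) / dist (z i) (z a) ^ s := by
      intro z
      refine Finset.sum_congr rfl fun a _ => ?_
      rw [hwsym, dist_comm]
    have hsame : ∑ a ∈ Finset.univ.erase i, ∑ b ∈ (Finset.univ.erase a).erase i,
          w (x' a) (x' b) / dist (x' a) (x' b) ^ s
        = ∑ a ∈ Finset.univ.erase i, ∑ b ∈ (Finset.univ.erase a).erase i,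
          w (x a) (x b) / dist (x a) (x b) ^ s := by
      refine Finset.sum_congr rfl fun a ha => Finset.sum_congr rfl fun b hb => ?_
      rw [hx'b a (Finset.mem_erase.1 ha).1, hx'b b (Finset.mem_erase.1 hb).1]
    have hkey : ∑ b ∈ Finset.univ.erase i, w (x i) (x b) / dist (x i) (x b) ^ s
        ≤ ∑ b ∈ Finset.univ.erase i, w (x' i) (x' b) / dist (x' i) (x' b) ^ s := by
      have e1 := hdecomp x
      have e2 := hdecomp x'
      rw [hsymmx x] at e1
      rw [hsymmx x', hsame] at e2
      rw [e1, e2] at hmle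
      linarith only [hmle]
    -- lower bound for the left side
    have hjmem : j ∈ Finset.univ.erase i := Finset.mem_erase.2 ⟨hij.symm, Finset.mem_univ j⟩
    have hδs0 : (0:ℝ) < δ ^ s := Real.rpow_pos_of_pos hδ0 _
    have hS_lb : η / δ ^ s ≤ ∑ b ∈ Finset.univ.erase i,
        w (x i) (x b) / dist (x i) (x b) ^ s := by
      have h1 : η / δ ^ s ≤ w (x i) (x j) / dist (x i) (x j) ^ s := by
        rw [← hδdef]
        exact (div_le_div_iff_of_pos_right hδs0).2 (hdiag (x i) (hxA i) (x j) (hxA j) hδρ)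
      exact le_trans h1 (Finset.single_le_sum
        (f := fun b => w (x i) (x b) / dist (x i) (x b) ^ s)
        (fun b _ => div_nonneg (hw0 _ _) (Real.rpow_nonneg dist_nonneg _)) hjmem)
    have hS'_ub : ∑ b ∈ Finset.univ.erase i, w (x' i) (x' b) / dist (x' i) (x' b) ^ s
        ≤ W * (C * (N:ℝ) ^ (s/α)) := by
      have h1 : ∀ b ∈ Finset.univ.erase i, w (x' i) (x' b) / dist (x' i) (x' b) ^ s
          ≤ W * dist y (x b) ^ (-s) := by
        intro b hb
        have hbne : b ≠ i := (Finset.mem_erase.1 hb).1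
        rw [hx'i, hx'b b hbne]
        have hd0 : 0 < dist y (x b) := hydist b hbne
        have hds0 : (0:ℝ) < dist y (x b) ^ s := Real.rpow_pos_of_pos hd0 _
        rw [Real.rpow_neg hd0.le, ← div_eq_mul_inv]
        exact (div_le_div_iff_of_pos_right hds0).2 (hWb y hyA (x b) (hxA b))
      calc ∑ b ∈ Finset.univ.erase i, w (x' i) (x' b) / dist (x' i) (x' b) ^ s
          ≤ ∑ b ∈ Finset.univ.erase i, W * dist y (x b) ^ (-s) := Finset.sum_le_sum h1
        _ = W * ∑ b ∈ Finset.univ.erase i, dist y (x b) ^ (-s) := by rw [Finset.mul_sum]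
        _ ≤ W * (C * (N:ℝ) ^ (s/α)) := mul_le_mul_of_nonneg_left hy2 hW0.le
    have hchain : η / δ ^ s ≤ W * (C * (N:ℝ) ^ (s/α)) :=
      le_trans hS_lb (le_trans hkey hS'_ub)
    have hR0 : (0:ℝ) < W * (C * (N:ℝ) ^ (s/α)) :=
      mul_pos hW0 (mul_pos hC0 (Real.rpow_pos_of_pos hN0 _))
    have hnum : η ≤ δ ^ s * (W * (C * (N:ℝ) ^ (s/α))) := by
      have h3 := (div_le_iff₀ hδs0).1 hchain
      linarith [h3, mul_comm (δ ^ s) (W * (C * (N:ℝ) ^ (s/α)))]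
    have hδs_lb : η / (W * (C * (N:ℝ) ^ (s/α))) ≤ δ ^ s := (div_le_iff₀ hR0).2 hnum
    have hroot : (η / (W * (C * (N:ℝ) ^ (s/α)))) ^ s⁻¹ ≤ δ := by
      have h2 := Real.rpow_le_rpow (div_pos hη hR0).le hδs_lb (inv_nonneg.2 hs0.le)
      rwa [Real.rpow_rpow_inv hδ0.le hs0.ne'] at h2
    have hT0 : (0:ℝ) < (N:ℝ) ^ (s/α) := Real.rpow_pos_of_pos hN0 _
    have hfact : (η / (W * (C * (N:ℝ) ^ (s/α)))) ^ s⁻¹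
        = (η / (W * C)) ^ s⁻¹ * (N:ℝ) ^ (-(1/α)) := by
      have e1 : η / (W * (C * (N:ℝ) ^ (s/α))) = (η / (W * C)) * (N:ℝ) ^ (-(s/α)) := by
        rw [Real.rpow_neg hN0.le]
        field_simp
      have e2 : (-(s/α)) * s⁻¹ = -(1/α) := by
        field_simp
      rw [e1, Real.mul_rpow (div_pos hη (mul_pos hW0 hC0)).le
        (Real.rpow_nonneg hN0.le _), ← Real.rpow_mul hN0.le, e2]
    refine le_trans (mul_le_mul_of_nonneg_right (min_le_right _ _) hNpow0.le) ?_
    rw [← hfact]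
    exact hroot
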